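/- For every TU game v, Φ^{k-SED}(v) = Φ^{Sh}(v̄), where v̄ is the game defined by v̄(S) = 0 if |S| < k and v̄(S) = v(S) if |S| ≥ k. -/
import Mathlib


open Finset

/-- The Shapley value of player `i` in the TU game `v` on player set `Fin n`. -/
noncomputable def shapley (n : ℕ) (v : Finset (Fin n) → ℝ) (i : Fin n) : ℝ :=
  ∑ S ∈ (Finset.univ.erase i).powerset,
      ((S.card.factorial * (n - S.card - 1).factorial : ℝ) / n.factorial) *
        (v (insert i S) - v S)

/-- The `k`-SED value of player `i` in the TU game `v` on player set `Fin n`. -/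
noncomputable def kSED (n k : ℕ) (v : Finset (Fin n) → ℝ) (i : Fin n) : ℝ :=
  (∑ S ∈ ((Finset.univ.erase i).powerset.filter (fun S => S.card = k - 1)),
      (((n - k).factorial * (k - 1).factorial : ℝ) / n.factorial) * v (insert i S))
  + ∑ S ∈ ((Finset.univ.erase i).powerset.filter (fun S => k ≤ S.card)),
      (((n - S.card - 1).factorial * S.card.factorial : ℝ) / n.factorial) *
        (v (insert i S) - v S)

/-- `Φ^{k-SED}(v) = Φ^{Sh}(v̄)` where `v̄` zeroes out coalitions of size `< k`. -/
theorem kSED_eq_shapley_truncated (n k : ℕ) (hk : 1 ≤ k) (hkn : k ≤ n)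
    (v : Finset (Fin n) → ℝ) (hv : v ∅ = 0) (i : Fin n) :
    kSED n k v i = shapley n (fun S => if S.card < k then 0 else v S) i := by
  classical
  set P := (Finset.univ.erase i).powerset with hP
  set w : Finset (Fin n) → ℝ := fun S => if S.card < k then 0 else v S with hw
  set f : Finset (Fin n) → ℝ := fun S =>
      ((S.card.factorial * (n - S.card - 1).factorial : ℝ) / n.factorial) *
        (w (insert i S) - w S) with hf
  have hins : ∀ S ∈ P, (insert i S).card = S.card + 1 := by
    intro S hS
    rw [Finset.card_insert_of_notMem]
    intro hi
    exact (Finset.mem_erase.mp (Finset.mem_powerset.mp hS hi)).1 rfl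
  have hsplit : shapley n w i
      = (∑ S ∈ P.filter (fun S => k ≤ S.card), f S)
        + ∑ S ∈ P.filter (fun S => ¬ k ≤ S.card), f S := by
    rw [shapley, Finset.sum_filter_add_sum_filter_not]
  have h1 : ∑ S ∈ P.filter (fun S => k ≤ S.card), f S
      = ∑ S ∈ P.filter (fun S => k ≤ S.card),
          (((n - S.card - 1).factorial * S.card.factorial : ℝ) / n.factorial) *
            (v (insert i S) - v S) := by
    refine Finset.sum_congr rfl ?_
    intro S hS
    obtain ⟨hSP, hkS⟩ := Finset.mem_filter.mp hS
    have hiS : (insert i S).card = S.card + 1 := hins S hSP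
    have h1 : ¬ (insert i S).card < k := by omega
    have h2 : ¬ S.card < k := by omega
    simp only [hf, hw, if_neg h1, if_neg h2, mul_comm]
  have h2 : ∑ S ∈ P.filter (fun S => ¬ k ≤ S.card), f S
      = ∑ S ∈ P.filter (fun S => S.card = k - 1),
          (((n - k).factorial * (k - 1).factorial : ℝ) / n.factorial) * v (insert i S) := by
    rw [← Finset.sum_subset (s₁ := P.filter (fun S => S.card = k - 1))]
    · refine Finset.sum_congr rfl ?_
      intro S hS
      obtain ⟨hSP, hkS⟩ := Finset.mem_filter.mp hS
      have hiS : (insert i S).card = S.card + 1 := hins S hSP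
      have h1 : ¬ (insert i S).card < k := by omega
      have h2 : S.card < k := by omega
      simp only [hf, hw, if_neg h1, hkS]
      rw [if_pos (show k - 1 < k by omega), sub_zero,
        (show n - (k - 1) - 1 = n - k by omega)]
      ring
    · intro S hS
      obtain ⟨hSP, hkS⟩ := Finset.mem_filter.mp hS
      refine Finset.mem_filter.mpr ⟨hSP, by omega⟩
    · intro S hS hS'
      obtain ⟨hSP, hkS⟩ := Finset.mem_filter.mp hS
      have hne : S.card ≠ k - 1 := by
        intro h
        exact hS' (Finset.mem_filter.mpr ⟨hSP, h⟩)
      have hiS : (insert i S).card = S.card + 1 := hins S hSP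
      have h1 : (insert i S).card < k := by omega
      have h2 : S.card < k := by omega
      simp [hf, hw, if_pos h1, if_pos h2]
  rw [kSED, hsplit, h1, h2, add_comm]
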